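/- Let G be a finite abelian group equipped with a bilinear pairing ⟨·,·⟩ : G × G → ℚ/ℤ that is alternating (⟨x,x⟩ = 0 for all x) and non-degenerate (if ⟨x,y⟩ = 0 for all y then x = 0). Then the order of G is a perfect square. -/

import Mathlib

lemma zmod_exists_zsmul_of_nsmul_eq_zero (N : ℕ) [NeZero N] (q a : ZMod N)
    {n : ℕ} (hq : addOrderOf q = n) (ha : n • a = 0) : ∃ k : ℤ, a = k • q := by
  have hN : N ≠ 0 := NeZero.ne N
  have hndvd : n ∣ N := by
    rw [← hq]
    simpa using (addOrderOf_dvd_card (x := q))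
  have hn0 : n ≠ 0 := by
    rw [← hq]; exact (addOrderOf_pos q).ne'
  obtain ⟨d, hd⟩ : ∃ d, N = n * d := hndvd
  have hd0 : d ≠ 0 := by rintro rfl; simp [hd] at hN
  have key : ∀ b : ZMod N, n • b = 0 → b ∈ AddSubgroup.zmultiples ((d : ℕ) : ZMod N) := by
    intro b hb
    have hbv : ((n * b.val : ℕ) : ZMod N) = 0 := by
      push_cast
      rw [ZMod.natCast_val, ZMod.cast_id]
      simpa [nsmul_eq_mul] using hb
    rw [ZMod.natCast_eq_zero_iff] at hbv
    obtain ⟨c, hc⟩ := hbv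
    have h2 : n * b.val = n * (d * c) := by rw [hc, hd, mul_assoc]
    have hdvd : d ∣ b.val := ⟨c, Nat.eq_of_mul_eq_mul_left (Nat.pos_of_ne_zero hn0) h2⟩
    refine ⟨((b.val / d : ℕ) : ℤ), ?_⟩
    show ((b.val / d : ℕ) : ℤ) • ((d : ℕ) : ZMod N) = b
    rw [natCast_zsmul, nsmul_eq_mul, ← Nat.cast_mul, Nat.div_mul_cancel hdvd,
      ZMod.natCast_val, ZMod.cast_id]
  have hqmem : q ∈ AddSubgroup.zmultiples ((d : ℕ) : ZMod N) :=
    key q (hq ▸ addOrderOf_nsmul_eq_zero q)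
  have hdN : d ∣ N := ⟨n, by rw [hd, mul_comm]⟩
  have hcard_d : addOrderOf ((d : ℕ) : ZMod N) = n := by
    rw [ZMod.addOrderOf_coe d hN, Nat.gcd_eq_right hdN, hd,
      Nat.mul_div_cancel _ (Nat.pos_of_ne_zero hd0)]
  have hle : AddSubgroup.zmultiples q ≤ AddSubgroup.zmultiples ((d : ℕ) : ZMod N) := by
    rw [AddSubgroup.zmultiples_le]; exact hqmem
  have heq : AddSubgroup.zmultiples q = AddSubgroup.zmultiples ((d : ℕ) : ZMod N) := by
    apply AddSubgroup.eq_of_le_of_card_ge hle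
    rw [Nat.card_zmultiples, Nat.card_zmultiples, hq, hcard_d]
  have hmem := key a ha
  rw [← heq] at hmem
  obtain ⟨k, hk⟩ := hmem
  exact ⟨k, hk.symm⟩

universe u

set_option maxHeartbeats 1000000 in
theorem aux_pairing_square (N : ℕ) [NeZero N] (c : ℕ) :
    ∀ (G : Type u) [AddCommGroup G] [Fintype G],
      Fintype.card G ≤ c →
      ∀ (B : G → G → ZMod N),
        (∀ x y z : G, B (x + y) z = B x z + B y z) →
        (∀ x y z : G, B x (y + z) = B x y + B x z) →
        (∀ x : G, B x x = 0) →
        (∀ x : G, (∀ y : G, B x y = 0) → x = 0) →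
        IsSquare (Fintype.card G) := by
  induction c with
  | zero =>
    intro G _ _ hle B _ _ _ _
    have := Fintype.card_pos (α := G)
    omega
  | succ c ih =>
    intro G _ _ hle B hL hR halt hnd
    by_cases htriv : ∀ x : G, x = 0
    · have h1 : Fintype.card G = 1 := Fintype.card_eq_one_iff.mpr ⟨0, fun a => htriv a⟩
      rw [h1]; exact ⟨1, rfl⟩
    push_neg at htriv
    obtain ⟨x₁, hx₁⟩ := htriv
    classical
    -- the homomorphism χ
    set χ : G →+ (G →+ ZMod N) := AddMonoidHom.mk'
      (fun g => AddMonoidHom.mk' (fun y => B g y) (fun a b => hR g a b))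
      (fun a b => AddMonoidHom.ext fun y => hL a b y) with hχdef
    have hχapp : ∀ g y, χ g y = B g y := fun _ _ => rfl
    have hinj : Function.Injective χ := by
      rw [injective_iff_map_eq_zero]
      intro a ha
      exact hnd a (fun y => by rw [← hχapp, ha]; rfl)
    -- the range of χ is a finite group; use its exponent
    haveI hfin : Finite ↥χ.range :=
      Finite.of_surjective (fun g : G => (⟨χ g, AddMonoidHom.mem_range.mpr ⟨g, rfl⟩⟩ : ↥χ.range))
        (by rintro ⟨_, g, rfl⟩; exact ⟨g, rfl⟩)
    obtain ⟨s, hs⟩ := AddMonoid.exists_addOrderOf_eq_exponent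
      (AddMonoid.ExponentExists.of_finite (G := ↥χ.range))
    obtain ⟨x₀, hx₀⟩ := AddMonoidHom.mem_range.mp s.2
    set n : ℕ := addOrderOf (χ x₀) with hndef
    have hsn : addOrderOf s = n := by
      rw [hndef, hx₀, AddSubgroup.addOrderOf_coe]
    have hn0 : n ≠ 0 := by
      rw [← hsn]
      exact (addOrderOf_pos s).ne'
    -- every χ u has order dividing n
    have hord_dvd : ∀ u : G, addOrderOf (χ u) ∣ n := by
      intro u
      have h1 := AddMonoid.addOrder_dvd_exponent (⟨χ u, AddMonoidHom.mem_range.mpr ⟨u, rfl⟩⟩ : ↥χ.range)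
      rwa [← hs, hsn, AddSubgroup.addOrderOf_mk] at h1
    have hvaldvd : ∀ u v : G, addOrderOf (B u v) ∣ addOrderOf (χ u) := by
      intro u v
      rw [addOrderOf_dvd_iff_nsmul_eq_zero]
      have h1 : (addOrderOf (χ u)) • B u v = ((addOrderOf (χ u)) • (χ u)) v := by
        rw [AddMonoidHom.nsmul_apply, hχapp]
      rw [h1, addOrderOf_nsmul_eq_zero]
      rfl
    have hn1 : n ≠ 1 := by
      intro h1
      apply hx₁
      have h2 : addOrderOf (χ x₁) = 1 := Nat.eq_one_of_dvd_one (h1 ▸ hord_dvd x₁)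
      rw [AddMonoid.addOrderOf_eq_one_iff] at h2
      exact hinj (by rw [h2, map_zero])
    -- find y₀ so that B x₀ y₀ generates the image of χ x₀
    obtain ⟨g, hg⟩ := IsAddCyclic.exists_generator (α := ↥(χ x₀).range)
    obtain ⟨y₀, hy₀⟩ := AddMonoidHom.mem_range.mp g.2
    set q : ZMod N := B x₀ y₀ with hqdef
    have hgq : (g : ZMod N) = q := by rw [← hy₀]; rfl
    have hq_dvd : addOrderOf q ∣ n := (hvaldvd x₀ y₀).trans (hord_dvd x₀)
    have hn_dvd : n ∣ addOrderOf q := by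
      rw [hndef, addOrderOf_dvd_iff_nsmul_eq_zero]
      ext y
      show (addOrderOf q) • B x₀ y = 0
      obtain ⟨k, hk⟩ := hg ⟨χ x₀ y, AddMonoidHom.mem_range.mpr ⟨y, rfl⟩⟩
      have hk' : k • q = B x₀ y := by
        have := congrArg (Subtype.val) hk
        simpa [hgq, hχapp] using this
      rw [← hk', smul_comm, addOrderOf_nsmul_eq_zero, smul_zero]
    have hqn : addOrderOf q = n := Nat.dvd_antisymm hq_dvd hn_dvd
    -- coefficients
    have hnsmul_zero : ∀ g : G, n • B g x₀ = 0 ∧ n • B g y₀ = 0 := by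
      intro g
      constructor <;>
        exact addOrderOf_dvd_iff_nsmul_eq_zero.mp ((hvaldvd g _).trans (hord_dvd g))
    have hcoefx : ∀ g : G, ∃ k : ℤ, B g x₀ = k • q := fun g =>
      zmod_exists_zsmul_of_nsmul_eq_zero N q _ hqn (hnsmul_zero g).1
    have hcoefy : ∀ g : G, ∃ l : ℤ, B g y₀ = l • q := fun g =>
      zmod_exists_zsmul_of_nsmul_eq_zero N q _ hqn (hnsmul_zero g).2
    set kf : G → ℤ := fun g => (hcoefx g).choose with hkfdef
    set lf : G → ℤ := fun g => (hcoefy g).choose with hlfdef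
    have hkf : ∀ g, B g x₀ = kf g • q := fun g => (hcoefx g).choose_spec
    have hlf : ∀ g, B g y₀ = lf g • q := fun g => (hcoefy g).choose_spec
    have castfact : ∀ k : ℤ, k • q = 0 ↔ ((k : ZMod n) = 0) := by
      intro k
      rw [← addOrderOf_dvd_iff_zsmul_eq_zero, hqn, ZMod.intCast_zmod_eq_zero_iff_dvd]
    have hcast : ∀ k k' : ℤ, k • q = k' • q → ((k : ZMod n) = (k' : ZMod n)) := by
      intro k k' h
      have h2 : (k - k') • q = 0 := by
        rw [sub_zsmul, h]
        abel
      rw [castfact] at h2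
      push_cast at h2
      exact sub_eq_zero.mp h2
    -- skew-symmetry
    have hskew : ∀ u v : G, B u v = - B v u := by
      intro u v
      have h0 : B (u + v) (u + v) = 0 := halt _
      rw [hL, hR, hR, halt, halt, zero_add, add_zero] at h0
      exact eq_neg_of_add_eq_zero_left h0
    -- the coordinate homomorphism ρ
    have hadd1 : ∀ a b : G, ((kf (a + b) : ZMod n)) = ((kf a : ZMod n)) + ((kf b : ZMod n)) := by
      intro a b
      have h1 : (kf (a + b)) • q = (kf a + kf b) • q := by
        rw [← hkf, add_zsmul, ← hkf, ← hkf, hL]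
      have := hcast _ _ h1
      rw [this]; push_cast; ring
    have hadd2 : ∀ a b : G, ((lf (a + b) : ZMod n)) = ((lf a : ZMod n)) + ((lf b : ZMod n)) := by
      intro a b
      have h1 : (lf (a + b)) • q = (lf a + lf b) • q := by
        rw [← hlf, add_zsmul, ← hlf, ← hlf, hL]
      have := hcast _ _ h1
      rw [this]; push_cast; ring
    set ρ : G →+ (ZMod n × ZMod n) :=
      (AddMonoidHom.mk' (fun g => ((kf g : ZMod n))) hadd1).prod
      (AddMonoidHom.mk' (fun g => ((lf g : ZMod n))) hadd2) with hρdef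
    have hρapp : ∀ g : G, ρ g = (((kf g : ZMod n)), ((lf g : ZMod n))) := fun _ => rfl
    have hρx₀ : ρ x₀ = (0, 1) := by
      rw [hρapp]
      have h1 : kf x₀ • q = (0 : ℤ) • q := by rw [← hkf, halt, zero_zsmul]
      have h2 : lf x₀ • q = (1 : ℤ) • q := by rw [← hlf, one_zsmul]
      have e1 := hcast _ _ h1
      have e2 := hcast _ _ h2
      rw [Prod.ext_iff]
      exact ⟨by rw [e1]; push_cast; ring, by rw [e2]; push_cast; ring⟩
    have hρy₀ : ρ y₀ = (-1, 0) := by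
      rw [hρapp]
      have h1 : kf y₀ • q = (-1 : ℤ) • q := by
        rw [← hkf, hskew y₀ x₀, ← hqdef, neg_zsmul, one_zsmul]
      have h2 : lf y₀ • q = (0 : ℤ) • q := by rw [← hlf, halt, zero_zsmul]
      have e1 := hcast _ _ h1
      have e2 := hcast _ _ h2
      rw [Prod.ext_iff]
      exact ⟨by rw [e1]; push_cast; ring, by rw [e2]; push_cast; ring⟩
    have hρcomb : ∀ a b : ℤ, ρ (a • x₀ + b • y₀) = (((-b : ℤ) : ZMod n), ((a : ℤ) : ZMod n)) := by
      intro a b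
      rw [map_add, map_zsmul, map_zsmul, hρx₀, hρy₀]
      rw [Prod.ext_iff]
      constructor
      · show a • (0 : ZMod n) + b • (-1 : ZMod n) = _
        rw [smul_zero, zero_add, zsmul_eq_mul]
        push_cast
        ring
      · show a • (1 : ZMod n) + b • (0 : ZMod n) = _
        rw [smul_zero, add_zero, zsmul_eq_mul, mul_one]
    have hsurj : Function.Surjective ρ := by
      rintro ⟨i, j⟩
      obtain ⟨a, ha⟩ := ZMod.intCast_surjective (n := n) j
      obtain ⟨b, hb⟩ := ZMod.intCast_surjective (n := n) i
      refine ⟨a • x₀ + (-b) • y₀, ?_⟩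
      rw [hρcomb]
      rw [Prod.ext_iff]
      exact ⟨by rw [neg_neg]; exact hb, ha⟩
    -- kernel description
    have hker : ∀ g : G, g ∈ ρ.ker ↔ (B g x₀ = 0 ∧ B g y₀ = 0) := by
      intro g
      rw [AddMonoidHom.mem_ker, hρapp, Prod.ext_iff]
      show ((kf g : ZMod n)) = 0 ∧ ((lf g : ZMod n)) = 0 ↔ _
      rw [← castfact, ← castfact, ← hkf, ← hlf]
    -- counting
    haveI : NeZero n := ⟨hn0⟩
    have hcards : Nat.card G = (n * n) * Nat.card ↥ρ.ker := by
      rw [AddSubgroup.card_eq_card_quotient_mul_card_addSubgroup ρ.ker]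
      congr 1
      rw [Nat.card_congr (QuotientAddGroup.quotientKerEquivOfSurjective ρ hsurj).toEquiv]
      rw [Nat.card_prod, Nat.card_eq_fintype_card, ZMod.card]
    -- decomposition of arbitrary elements
    have hdecomp : ∀ y : G, ∃ (az bz : ℤ) (w : G), w ∈ ρ.ker ∧ y = az • x₀ + bz • y₀ + w := by
      intro y
      obtain ⟨a, ha⟩ := ZMod.intCast_surjective (n := n) (ρ y).2
      obtain ⟨b, hb⟩ := ZMod.intCast_surjective (n := n) (ρ y).1
      refine ⟨a, -b, y - (a • x₀ + (-b) • y₀), ?_, by abel⟩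
      rw [AddMonoidHom.mem_ker, map_sub, hρcomb]
      rw [neg_neg, hb, ha, sub_eq_zero]
    -- the restricted pairing on the kernel
    haveI : Fintype ↥ρ.ker := Fintype.ofFinite _
    have hKcard_pos : 0 < Nat.card ↥ρ.ker := Nat.card_pos
    have hn2 : 2 ≤ n := by omega
    have hcardG : Nat.card G = Fintype.card G := Nat.card_eq_fintype_card
    have hcardK : Nat.card ↥ρ.ker = Fintype.card ↥ρ.ker := Nat.card_eq_fintype_card
    have h44 : 2 * 2 ≤ n * n := Nat.mul_le_mul hn2 hn2
    have hq4 : 4 * Nat.card ↥ρ.ker ≤ Nat.card G := by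
      rw [hcards]
      exact Nat.mul_le_mul h44 (le_refl _)
    have hKlt : Fintype.card ↥ρ.ker ≤ c := by omega
    have hsmul2 : ∀ (u v : G) (m : ℤ), B u (m • v) = m • B u v := by
      intro u v m
      have := map_zsmul (χ u) m v
      simpa [hχapp] using this
    have hsq := ih ↥ρ.ker hKlt (fun a b => B a b)
      (by intro x y z; show B ↑(x + y) ↑z = B ↑x ↑z + B ↑y ↑z; rw [AddSubgroup.coe_add, hL])
      (by intro x y z; show B ↑x ↑(y + z) = B ↑x ↑y + B ↑x ↑z; rw [AddSubgroup.coe_add, hR])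
      (by intro x; exact halt _)
      (by
        intro x hx
        have hx0 : (x : G) = 0 := by
          apply hnd
          intro y
          obtain ⟨az, bz, w, hw, rfl⟩ := hdecomp y
          rw [hR, hR, hsmul2, hsmul2]
          have h1 := (hker x).mp x.2
          rw [h1.1, h1.2, smul_zero, smul_zero, zero_add, zero_add]
          exact hx ⟨w, hw⟩
        exact Subtype.ext hx0)
    obtain ⟨m, hm⟩ := hsq
    refine ⟨n * m, ?_⟩
    have : Fintype.card G = (n * n) * (m * m) := by
      rw [← hcardG, hcards, hcardK, hm]
    rw [this]
    ring

theorem card_isSquare_of_nondeg_alternating_pairing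
    (G : Type*) [AddCommGroup G] [Fintype G]
    (B : G → G → ℚ ⧸ AddSubgroup.zmultiples (1 : ℚ))
    (hadd_left : ∀ x y z : G, B (x + y) z = B x z + B y z)
    (hadd_right : ∀ x y z : G, B x (y + z) = B x y + B x z)
    (halt : ∀ x : G, B x x = 0)
    (hnondeg : ∀ x : G, (∀ y : G, B x y = 0) → x = 0) :
    IsSquare (Fintype.card G) := by
  classical
  set N := Fintype.card G with hN
  haveI : NeZero N := ⟨Fintype.card_pos.ne'⟩
  have hNQ : (N : ℚ) ≠ 0 := by
    exact_mod_cast (Fintype.card_pos (α := G)).ne'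
  set f : ℤ →+ ℚ ⧸ AddSubgroup.zmultiples (1 : ℚ) :=
    (QuotientAddGroup.mk' (AddSubgroup.zmultiples (1 : ℚ))).comp
      (AddMonoidHom.mk' (fun m : ℤ => ((m : ℚ) / N : ℚ)) (by intro a b; push_cast; ring)) with hfdef
  have hfapp : ∀ m : ℤ, f m = QuotientAddGroup.mk' (AddSubgroup.zmultiples (1 : ℚ)) ((m : ℚ) / N) :=
    fun _ => rfl
  have hfN : f (N : ℤ) = 0 := by
    rw [hfapp, show ((N : ℤ) : ℚ) / N = (1 : ℚ) by push_cast; field_simp]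
    exact (QuotientAddGroup.eq_zero_iff _).mpr (AddSubgroup.mem_zmultiples _)
  set e : ZMod N →+ ℚ ⧸ AddSubgroup.zmultiples (1 : ℚ) := ZMod.lift N ⟨f, hfN⟩ with hedef
  have he : ∀ m : ℤ, e ((m : ZMod N)) = f m := fun m => ZMod.lift_coe N ⟨f, hfN⟩ m
  have einj : Function.Injective e := by
    rw [ZMod.lift_injective]
    intro m hm
    rw [hfapp, QuotientAddGroup.mk'_apply, QuotientAddGroup.eq_zero_iff,
      AddSubgroup.mem_zmultiples_iff] at hm
    obtain ⟨k, hk⟩ := hm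
    rw [zsmul_eq_mul, mul_one] at hk
    have hk2 : (m : ℚ) = k * N := by
      rw [eq_div_iff hNQ] at hk
      linarith [hk]
    have hk3 : m = k * (N : ℤ) := by exact_mod_cast hk2
    rw [ZMod.intCast_zmod_eq_zero_iff_dvd]
    exact ⟨k, by rw [hk3, mul_comm]⟩
  have hrange : ∀ u v : G, ∃ a : ZMod N, e a = B u v := by
    intro u v
    set Lv : G →+ ℚ ⧸ AddSubgroup.zmultiples (1 : ℚ) :=
      AddMonoidHom.mk' (fun w => B w v) (fun a b => hadd_left a b v) with hLvdef
    have hNB : N • B u v = 0 := by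
      have h1 : Lv (N • u) = N • Lv u := map_nsmul Lv N u
      rw [hN] at h1
      rw [card_nsmul_eq_zero, map_zero] at h1
      rw [hN]
      exact h1.symm
    obtain ⟨r, hr⟩ := QuotientAddGroup.mk'_surjective (AddSubgroup.zmultiples (1 : ℚ)) (B u v)
    have h2 : QuotientAddGroup.mk' (AddSubgroup.zmultiples (1 : ℚ)) ((N : ℚ) * r) = 0 := by
      rw [show ((N : ℚ) * r) = N • r from (nsmul_eq_mul N r).symm, map_nsmul, hr]
      exact hNB
    rw [QuotientAddGroup.mk'_apply, QuotientAddGroup.eq_zero_iff,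
      AddSubgroup.mem_zmultiples_iff] at h2
    obtain ⟨k, hk⟩ := h2
    rw [zsmul_eq_mul, mul_one] at hk
    refine ⟨((k : ℤ) : ZMod N), ?_⟩
    rw [he, hfapp, ← hr]
    congr 1
    rw [div_eq_iff hNQ]
    linarith [hk]
  set B' : G → G → ZMod N := fun u v => (hrange u v).choose with hB'def
  have hB' : ∀ u v : G, e (B' u v) = B u v := fun u v => (hrange u v).choose_spec
  have := aux_pairing_square N (Fintype.card G) G le_rfl B'
    (by
      intro x y z
      apply einj
      rw [hB', map_add, hB', hB']
      exact hadd_left x y z)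
    (by
      intro x y z
      apply einj
      rw [hB', map_add, hB', hB']
      exact hadd_right x y z)
    (by
      intro x
      apply einj
      rw [hB', map_zero]
      exact halt x)
    (by
      intro x hx
      apply hnondeg
      intro y
      rw [← hB', hx y, map_zero])
  exact this
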